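/- arXiv:1808.06544 — 4 statements merged into one kernel-verified Lean document; each statement's English description precedes it below -/
import Mathlib

section
/- For fixed ε, the log-likelihood Ω is differentiable as a function of the core-score vector θ ∈ ℝⁿ, and for every vertex w the partial derivative of Ω with respect to θ w equals (Σ_{u ≠ w} A u w) − (Σ_{u ≠ w} ρ u w), i.e., the degree of w in the input network minus the expected degree of w under the model. -/
open Real Finset

/-- Edge probability of the spatial core-periphery model:
`ρ u v = exp (θ u + θ v) / (exp (θ u + θ v) + (K u v) ^ ε)`. -/
noncomputable def edgeProb {n : ℕ} (K : Fin n → Fin n → ℝ) (θ : Fin n → ℝ) (ε : ℝ)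
    (u v : Fin n) : ℝ :=
  exp (θ u + θ v) / (exp (θ u + θ v) + (K u v) ^ ε)

/-- Log-likelihood `Ω(θ, ε) = Σ_{u < v} [A u v * log ρ u v + (1 - A u v) * log (1 - ρ u v)]`. -/
noncomputable def logLik {n : ℕ} (A K : Fin n → Fin n → ℝ) (θ : Fin n → ℝ) (ε : ℝ) : ℝ :=
  ∑ p ∈ univ.filter (fun p : Fin n × Fin n => p.1 < p.2),
    (A p.1 p.2 * log (edgeProb K θ ε p.1 p.2) +
      (1 - A p.1 p.2) * log (1 - edgeProb K θ ε p.1 p.2))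

private lemma key_deriv (a c k : ℝ) (hk : 0 < k) (x : ℝ) :
    HasDerivAt (fun t : ℝ => a * log (exp (t + c) / (exp (t + c) + k)) +
      (1 - a) * log (1 - exp (t + c) / (exp (t + c) + k)))
      (a - exp (x + c) / (exp (x + c) + k)) x := by
  have hE : HasDerivAt (fun t : ℝ => exp (t + c)) (exp (x + c)) x := by
    simpa using ((hasDerivAt_id x).add_const c).exp
  have hDpos : ∀ t : ℝ, 0 < exp (t + c) + k := fun t => add_pos (exp_pos _) hk
  have hD : HasDerivAt (fun t : ℝ => exp (t + c) + k) (exp (x + c)) x := hE.add_const k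
  have hρ : HasDerivAt (fun t : ℝ => exp (t + c) / (exp (t + c) + k))
      ((exp (x + c) * (exp (x + c) + k) - exp (x + c) * exp (x + c)) /
        (exp (x + c) + k) ^ 2) x := hE.div hD (hDpos x).ne'
  have hρpos : 0 < exp (x + c) / (exp (x + c) + k) := div_pos (exp_pos _) (hDpos x)
  have hρlt : exp (x + c) / (exp (x + c) + k) < 1 :=
    (div_lt_one (hDpos x)).2 (by linarith [exp_pos (x + c)])
  have h1 := hρ.log hρpos.ne'
  have h2 := ((hasDerivAt_const x (1 : ℝ)).fun_sub hρ).log (by linarith)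
  have h3 := (h1.const_mul a).add (h2.const_mul (1 - a))
  refine h3.congr_deriv ?_
  have hD2 : (exp (x + c) + k) ≠ 0 := (hDpos x).ne'
  have h1ρ : (1 : ℝ) - exp (x + c) / (exp (x + c) + k) ≠ 0 := by linarith
  have hk0 : k ≠ 0 := hk.ne'
  field_simp
  linear_combination (a * exp (x + c) + a * k - exp (x + c)) * mul_inv_cancel₀ hk0

private lemma pair_sum {n : ℕ} (w : Fin n) (g : Fin n → ℝ) :
    ∑ p ∈ univ.filter (fun p : Fin n × Fin n => p.1 < p.2),
      ((if p.1 = w then g p.2 else 0) + (if p.2 = w then g p.1 else 0))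
    = ∑ u ∈ univ.filter (· ≠ w), g u := by
  rw [sum_filter, Fintype.sum_prod_type, sum_filter]
  have key : ∀ u : Fin n,
      (∑ v : Fin n, if u < v then ((if u = w then g v else 0) + (if v = w then g u else 0)) else 0)
      = (if u = w then ∑ v : Fin n, if w < v then g v else 0 else 0) + (if u < w then g u else 0) := by
    intro u
    by_cases hu : u = w
    · subst hu
      have h1 : (∑ v : Fin n, if u < v then ((if u = u then g v else 0) + (if v = u then g u else 0)) else 0)
          = ∑ v : Fin n, if u < v then g v else 0 :=
        sum_congr rfl fun v _ => by
          by_cases hv : u < v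
          · simp [hv, hv.ne']
          · simp [hv]
      rw [h1, if_pos rfl, if_neg (lt_irrefl u), add_zero]
    · have h1 : (∑ v : Fin n, if u < v then ((if u = w then g v else 0) + (if v = w then g u else 0)) else 0)
          = ∑ v : Fin n, if v = w then (if u < w then g u else 0) else 0 :=
        sum_congr rfl fun v _ => by
          by_cases hv : v = w
          · subst hv; by_cases h2 : u < v <;> simp [hu, h2]
          · by_cases h2 : u < v <;> simp [hv, h2, hu]
      rw [h1, if_neg hu, zero_add, sum_ite_eq' univ w, if_pos (mem_univ w)]
  simp only [key]
  rw [sum_add_distrib, sum_ite_eq' univ w, if_pos (mem_univ w)]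
  have h2 : ∀ u ∈ (univ : Finset (Fin n)), (if u ≠ w then g u else 0)
      = (if w < u then g u else 0) + (if u < w then g u else 0) := by
    intro u _; rcases lt_trichotomy u w with h | h | h
    · simp [h, ne_of_lt h, not_lt_of_gt h]
    · simp [h]
    · simp [ne_of_gt h, h, not_lt_of_gt h]
  rw [sum_congr rfl h2, sum_add_distrib]

/-- For fixed `ε`, the log-likelihood `Ω` is differentiable as a function of the core-score
vector `θ ∈ ℝⁿ`, and for every vertex `w` the partial derivative of `Ω` with respect to
`θ w` equals `(Σ_{u ≠ w} A u w) - (Σ_{u ≠ w} ρ u w)`: the degree of `w` in the input network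
minus the expected degree of `w` under the model. -/
theorem logLik_deriv_core_score
    (n : ℕ) (A K : Fin n → Fin n → ℝ)
    (hA : ∀ u v, A u v = 0 ∨ A u v = 1) (hAsymm : ∀ u v, A u v = A v u)
    (hAdiag : ∀ u, A u u = 0)
    (hKsymm : ∀ u v, K u v = K v u) (hKpos : ∀ u v : Fin n, u ≠ v → 0 < K u v)
    (ε : ℝ) :
    Differentiable ℝ (fun θ : Fin n → ℝ => logLik A K θ ε) ∧
    ∀ (θ : Fin n → ℝ) (w : Fin n),
      HasDerivAt (fun t : ℝ => logLik A K (Function.update θ w t) ε)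
        ((∑ u ∈ univ.filter (· ≠ w), A u w) -
          ∑ u ∈ univ.filter (· ≠ w), edgeProb K θ ε u w) (θ w) := by
  have hρsymm : ∀ (θ : Fin n → ℝ) (u v : Fin n), edgeProb K θ ε u v = edgeProb K θ ε v u := by
    intro θ u v
    simp [edgeProb, add_comm (θ u) (θ v), hKsymm u v]
  constructor
  · -- differentiability
    unfold logLik
    apply Differentiable.fun_sum
    intro p hp
    simp only [mem_filter] at hp
    have hne : p.1 ≠ p.2 := ne_of_lt hp.2
    have hk : 0 < K p.1 p.2 ^ ε := Real.rpow_pos_of_pos (hKpos _ _ hne) ε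
    have hlin : Differentiable ℝ (fun θ : Fin n → ℝ => θ p.1 + θ p.2) :=
      ((ContinuousLinearMap.proj p.1 : (Fin n → ℝ) →L[ℝ] ℝ).differentiable).add
        ((ContinuousLinearMap.proj p.2 : (Fin n → ℝ) →L[ℝ] ℝ).differentiable)
    have he : Differentiable ℝ (fun θ : Fin n → ℝ => exp (θ p.1 + θ p.2)) := hlin.exp
    have hDpos : ∀ θ : Fin n → ℝ, 0 < exp (θ p.1 + θ p.2) + K p.1 p.2 ^ ε :=
      fun θ => add_pos (exp_pos _) hk
    have heq : (fun θ : Fin n → ℝ => A p.1 p.2 * log (edgeProb K θ ε p.1 p.2) +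
        (1 - A p.1 p.2) * log (1 - edgeProb K θ ε p.1 p.2))
        = fun θ : Fin n → ℝ => (A p.1 p.2 * (θ p.1 + θ p.2) +
            (1 - A p.1 p.2) * log (K p.1 p.2 ^ ε)) -
          log (exp (θ p.1 + θ p.2) + K p.1 p.2 ^ ε) := by
      funext θ
      have hone : 1 - edgeProb K θ ε p.1 p.2
          = K p.1 p.2 ^ ε / (exp (θ p.1 + θ p.2) + K p.1 p.2 ^ ε) := by
        rw [edgeProb]
        field_simp
        ring
      rw [hone, edgeProb, log_div (exp_pos _).ne' (hDpos θ).ne',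
        log_div hk.ne' (hDpos θ).ne', log_exp]
      ring
    rw [heq]
    have hlog : Differentiable ℝ
        (fun θ : Fin n → ℝ => log (exp (θ p.1 + θ p.2) + K p.1 p.2 ^ ε)) :=
      Differentiable.log (he.add_const _) fun θ => (hDpos θ).ne'
    exact ((hlin.const_mul (A p.1 p.2)).add (differentiable_const _)).sub hlog
  · intro θ w
    set g : Fin n → ℝ := fun u => A u w - edgeProb K θ ε u w with hgdef
    have hsum : HasDerivAt (fun t : ℝ => logLik A K (Function.update θ w t) ε)
        (∑ p ∈ univ.filter (fun p : Fin n × Fin n => p.1 < p.2),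
          ((if p.1 = w then g p.2 else 0) + (if p.2 = w then g p.1 else 0))) (θ w) := by
      unfold logLik
      apply HasDerivAt.fun_sum
      intro p hp
      simp only [mem_filter] at hp
      have hne : p.1 ≠ p.2 := ne_of_lt hp.2
      by_cases h1 : p.1 = w
      · have h2 : p.2 ≠ w := fun h => hne (h1.trans h.symm)
        have hk : 0 < K w p.2 ^ ε :=
          Real.rpow_pos_of_pos (hKpos _ _ (fun h => h2 (h.symm))) ε
        have heq : (fun t : ℝ => A p.1 p.2 * log (edgeProb K (Function.update θ w t) ε p.1 p.2) +
            (1 - A p.1 p.2) * log (1 - edgeProb K (Function.update θ w t) ε p.1 p.2))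
            = fun t : ℝ => A w p.2 * log (exp (t + θ p.2) / (exp (t + θ p.2) + K w p.2 ^ ε)) +
              (1 - A w p.2) * log (1 - exp (t + θ p.2) / (exp (t + θ p.2) + K w p.2 ^ ε)) := by
          funext t
          rw [h1]
          simp [edgeProb, Function.update_self, Function.update_of_ne h2]
        rw [if_pos h1, if_neg h2, add_zero, heq]
        have key := key_deriv (A w p.2) (θ p.2) (K w p.2 ^ ε) hk (θ w)
        have hgval : g p.2 = A w p.2 - exp (θ w + θ p.2) / (exp (θ w + θ p.2) + K w p.2 ^ ε) := by
          show A p.2 w - edgeProb K θ ε p.2 w = _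
          rw [hAsymm p.2 w, hρsymm θ p.2 w, edgeProb]
        rw [hgval]
        exact key
      · by_cases h2 : p.2 = w
        · have h1' : p.1 ≠ w := h1
          have hk : 0 < K p.1 w ^ ε :=
            Real.rpow_pos_of_pos (hKpos _ _ (h2 ▸ hne)) ε
          have heq : (fun t : ℝ => A p.1 p.2 * log (edgeProb K (Function.update θ w t) ε p.1 p.2) +
              (1 - A p.1 p.2) * log (1 - edgeProb K (Function.update θ w t) ε p.1 p.2))
              = fun t : ℝ => A p.1 w * log (exp (t + θ p.1) / (exp (t + θ p.1) + K p.1 w ^ ε)) +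
                (1 - A p.1 w) * log (1 - exp (t + θ p.1) / (exp (t + θ p.1) + K p.1 w ^ ε)) := by
            funext t
            rw [h2]
            simp [edgeProb, Function.update_self, Function.update_of_ne h1',
              add_comm (θ p.1) t]
          rw [if_neg h1, if_pos h2, zero_add, heq]
          have key := key_deriv (A p.1 w) (θ p.1) (K p.1 w ^ ε) hk (θ w)
          have hgval : g p.1 = A p.1 w - exp (θ w + θ p.1) / (exp (θ w + θ p.1) + K p.1 w ^ ε) := by
            show A p.1 w - edgeProb K θ ε p.1 w = _
            rw [edgeProb, add_comm (θ p.1) (θ w)]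
          rw [hgval]
          exact key
        · rw [if_neg h1, if_neg h2, add_zero]
          have heq : (fun t : ℝ => A p.1 p.2 * log (edgeProb K (Function.update θ w t) ε p.1 p.2) +
              (1 - A p.1 p.2) * log (1 - edgeProb K (Function.update θ w t) ε p.1 p.2))
              = fun _ : ℝ => A p.1 p.2 * log (edgeProb K θ ε p.1 p.2) +
                (1 - A p.1 p.2) * log (1 - edgeProb K θ ε p.1 p.2) := by
            funext t
            simp [edgeProb, Function.update_of_ne h1, Function.update_of_ne h2]
          rw [heq]
          exact hasDerivAt_const _ _
    have := (pair_sum w g) ▸ hsum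
    rw [hgdef] at this
    simpa [sum_sub_distrib] using this
end

section
/- Fix ε. If θ* ∈ ℝⁿ is a local maximizer of the map θ ↦ Ω(θ, ε), then for every vertex w the expected degree of w under the model evaluated at θ* equals the degree of w in the input network: Σ_{u ≠ w} ρ u w = Σ_{u ≠ w} A u w. -/
open Real Finset

/-- Fix `ε`. If `θ*` is a local maximizer of `θ ↦ Ω(θ, ε)`, then for every vertex `w` the
expected degree of `w` under the model evaluated at `θ*` equals the degree of `w` in the
input network: `Σ_{u ≠ w} ρ u w = Σ_{u ≠ w} A u w`. -/
theorem expected_degree_eq_degree_of_isLocalMax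
    (n : ℕ) (A K : Fin n → Fin n → ℝ)
    (hA : ∀ u v, A u v = 0 ∨ A u v = 1) (hAsymm : ∀ u v, A u v = A v u)
    (hAdiag : ∀ u, A u u = 0)
    (hKsymm : ∀ u v, K u v = K v u) (hKpos : ∀ u v : Fin n, u ≠ v → 0 < K u v)
    (ε : ℝ) (θ : Fin n → ℝ)
    (hmax : IsLocalMax (fun θ : Fin n → ℝ => logLik A K θ ε) θ) :
    ∀ w : Fin n,
      ∑ u ∈ univ.filter (· ≠ w), edgeProb K θ ε u w =
        ∑ u ∈ univ.filter (· ≠ w), A u w := by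
  intro w
  classical
  -- perturbation along coordinate w
  set φ : ℝ → (Fin n → ℝ) := fun t x => θ x + if x = w then t else 0 with hφdef
  have hφ0 : φ 0 = θ := by funext x; simp [φ]
  have hφcont : Continuous φ := by
    apply continuous_pi; intro x
    by_cases hx : x = w <;> simp [φ, hx] <;> fun_prop
  set f : ℝ → ℝ := fun t => logLik A K (φ t) ε with hfdef
  have hf : IsLocalMax f 0 := by
    have h : ContinuousAt φ 0 := hφcont.continuousAt
    rw [ContinuousAt, hφ0] at h
    have h2 := h.eventually hmax
    simpa [IsLocalMax, IsMaxFilter, f, hφ0] using h2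
  set F : Fin n → Fin n → ℝ := fun u v => A u v - edgeProb K θ ε u v with hFdef
  set c : Fin n × Fin n → ℝ :=
    fun p => (if p.1 = w then (1:ℝ) else 0) + (if p.2 = w then (1:ℝ) else 0) with hcdef
  -- derivative of each summand
  have hterm : ∀ p ∈ univ.filter (fun p : Fin n × Fin n => p.1 < p.2),
      HasDerivAt (fun t => A p.1 p.2 * log (edgeProb K (φ t) ε p.1 p.2) +
        (1 - A p.1 p.2) * log (1 - edgeProb K (φ t) ε p.1 p.2)) (c p * F p.1 p.2) 0 := by
    intro p hp
    rw [mem_filter] at hp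
    have hplt : p.1 < p.2 := hp.2
    have hk : (0:ℝ) < K p.1 p.2 ^ ε := Real.rpow_pos_of_pos (hKpos _ _ (ne_of_lt hplt)) ε
    set sfun : ℝ → ℝ := fun t => φ t p.1 + φ t p.2 with hsdef
    have hs1 : HasDerivAt (fun t => φ t p.1) (if p.1 = w then (1:ℝ) else 0) 0 := by
      by_cases h : p.1 = w <;> simp only [φ, h, if_pos, if_neg, if_true, if_false]
      · simpa using (hasDerivAt_id (0:ℝ)).const_add (θ w)
      · simpa using hasDerivAt_const (0:ℝ) (θ p.1 + 0)
    have hs2 : HasDerivAt (fun t => φ t p.2) (if p.2 = w then (1:ℝ) else 0) 0 := by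
      by_cases h : p.2 = w <;> simp only [φ, h, if_pos, if_neg, if_true, if_false]
      · simpa using (hasDerivAt_id (0:ℝ)).const_add (θ w)
      · simpa using hasDerivAt_const (0:ℝ) (θ p.2 + 0)
    have hs : HasDerivAt sfun (c p) 0 := hs1.add hs2
    have hs0 : sfun 0 = θ p.1 + θ p.2 := by simp [sfun, φ]
    have heq : ∀ t, A p.1 p.2 * log (edgeProb K (φ t) ε p.1 p.2) +
        (1 - A p.1 p.2) * log (1 - edgeProb K (φ t) ε p.1 p.2)
        = A p.1 p.2 * sfun t + (1 - A p.1 p.2) * log (K p.1 p.2 ^ ε)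
          - log (exp (sfun t) + K p.1 p.2 ^ ε) := by
      intro t
      have hd : (0:ℝ) < exp (sfun t) + K p.1 p.2 ^ ε := by positivity
      have h1 : log (edgeProb K (φ t) ε p.1 p.2)
          = sfun t - log (exp (sfun t) + K p.1 p.2 ^ ε) := by
        simp only [edgeProb]
        rw [Real.log_div (exp_ne_zero _) (ne_of_gt hd), Real.log_exp]
      have h2 : 1 - edgeProb K (φ t) ε p.1 p.2
          = K p.1 p.2 ^ ε / (exp (sfun t) + K p.1 p.2 ^ ε) := by
        simp only [edgeProb]
        field_simp
        simp only [hsdef]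
        ring
      rw [h1, h2, Real.log_div (ne_of_gt hk) (ne_of_gt hd)]
      ring
    have hrhs : HasDerivAt (fun t => A p.1 p.2 * sfun t + (1 - A p.1 p.2) * log (K p.1 p.2 ^ ε)
        - log (exp (sfun t) + K p.1 p.2 ^ ε)) (c p * F p.1 p.2) 0 := by
      have hd0 : (0:ℝ) < exp (sfun 0) + K p.1 p.2 ^ ε := by positivity
      have h3 : HasDerivAt (fun t => exp (sfun t) + K p.1 p.2 ^ ε) (exp (sfun 0) * c p) 0 :=
        (hs.exp).add_const _
      have h4 := h3.log (ne_of_gt hd0)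
      have h5 := (hs.const_mul (A p.1 p.2)).add_const
        ((1 - A p.1 p.2) * log (K p.1 p.2 ^ ε))
      have h6 := h5.sub h4
      refine h6.congr_deriv ?_
      simp only [F, edgeProb, hs0]
      field_simp
    have hfun : (fun t => A p.1 p.2 * log (edgeProb K (φ t) ε p.1 p.2) +
        (1 - A p.1 p.2) * log (1 - edgeProb K (φ t) ε p.1 p.2))
        = (fun t => A p.1 p.2 * sfun t + (1 - A p.1 p.2) * log (K p.1 p.2 ^ ε)
          - log (exp (sfun t) + K p.1 p.2 ^ ε)) := funext heq
    rw [hfun]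
    exact hrhs
  have hderiv : HasDerivAt f
      (∑ p ∈ univ.filter (fun p : Fin n × Fin n => p.1 < p.2), c p * F p.1 p.2) 0 := by
    have := HasDerivAt.fun_sum hterm
    simpa [f, logLik] using this
  have key : (∑ p ∈ univ.filter (fun p : Fin n × Fin n => p.1 < p.2), c p * F p.1 p.2) = 0 := by
    have h0 := hf.deriv_eq_zero
    rw [hderiv.deriv] at h0
    exact h0
  -- symmetry of F
  have hFsymm : ∀ u v, F u v = F v u := by
    intro u v
    simp only [F, edgeProb, hAsymm u v, hKsymm u v, add_comm (θ u) (θ v)]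
  -- combinatorial rearrangement
  have hpt : ∀ u v : Fin n, (if u < v then c (u, v) * F u v else 0)
      = (if w < v ∧ u = w then F w v else 0) + (if u < w ∧ v = w then F u w else 0) := by
    intro u v
    by_cases h2 : u = w <;> by_cases h3 : v = w
    · simp [h2, h3]
    · by_cases h1 : w < v <;> simp [c, h1, h2, h3]
    · by_cases h1 : u < w <;> simp [c, h1, h2, h3]
    · by_cases h1 : u < v <;> simp [c, h1, h2, h3]
  have hsum : (∑ p ∈ univ.filter (fun p : Fin n × Fin n => p.1 < p.2), c p * F p.1 p.2)
      = ∑ u ∈ univ.filter (· ≠ w), F u w := by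
    rw [sum_filter, Fintype.sum_prod_type]
    calc ∑ u, ∑ v, (if u < v then c (u, v) * F u v else 0)
        = ∑ u, ∑ v, ((if w < v ∧ u = w then F w v else 0) +
            (if u < w ∧ v = w then F u w else 0)) := by
          refine Finset.sum_congr rfl fun u _ => Finset.sum_congr rfl fun v _ => hpt u v
      _ = (∑ u, ∑ v, (if w < v ∧ u = w then F w v else 0)) +
            (∑ u, ∑ v, (if u < w ∧ v = w then F u w else 0)) := by
          rw [← Finset.sum_add_distrib]
          exact Finset.sum_congr rfl fun u _ => by rw [← Finset.sum_add_distrib]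
      _ = (∑ v, if w < v then F w v else 0) + (∑ u, if u < w then F u w else 0) := by
          congr 1
          · rw [Finset.sum_comm]
            refine Finset.sum_congr rfl fun v _ => ?_
            rw [Finset.sum_congr rfl (fun u _ => ?_), Finset.sum_ite_eq' univ w
              (fun _ => if w < v then F w v else 0)]
            · simp
            · by_cases h : u = w <;> by_cases h' : w < v <;> simp [h, h']
          · refine Finset.sum_congr rfl fun u _ => ?_
            rw [Finset.sum_congr rfl (fun v _ => ?_), Finset.sum_ite_eq' univ w
              (fun _ => if u < w then F u w else 0)]
            · simp
            · by_cases h : v = w <;> by_cases h' : u < w <;> simp [h, h']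
      _ = (∑ v, if w < v then F v w else 0) + (∑ u, if u < w then F u w else 0) := by
          congr 1
          exact Finset.sum_congr rfl fun v _ => by rw [hFsymm]
      _ = ∑ u ∈ univ.filter (· ≠ w), F u w := by
          rw [sum_filter, add_comm, ← Finset.sum_add_distrib]
          refine Finset.sum_congr rfl fun u _ => ?_
          rcases lt_trichotomy u w with h | h | h
          · simp [h, h.ne, not_lt.mpr h.le]
          · simp [h]
          · simp [h, h.ne', not_lt.mpr h.le]
  rw [hsum] at key
  have : ∑ u ∈ univ.filter (· ≠ w), (A u w - edgeProb K θ ε u w) = 0 := key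
  rw [Finset.sum_sub_distrib] at this
  linarith
end

section
/- Fix ε. If θ* ∈ ℝⁿ is a local maximizer of the map θ ↦ Ω(θ, ε), then the expected total number of edges under the model equals the number of edges of the input network: Σ_{u < v} ρ u v = Σ_{u < v} A u v. -/
open Real Finset

/-- Derivative of one log-likelihood term along a uniform shift of `θ`. -/
lemma key_hasDerivAt (s k a : ℝ) (hk : 0 < k) :
    HasDerivAt (fun t : ℝ =>
        a * log (exp (s + 2 * t) / (exp (s + 2 * t) + k)) +
          (1 - a) * log (1 - exp (s + 2 * t) / (exp (s + 2 * t) + k)))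
      (2 * (a - exp s / (exp s + k))) 0 := by
  have hpos : ∀ t : ℝ, 0 < exp (s + 2 * t) + k := fun t => by positivity
  have heq : (fun t : ℝ =>
        a * log (exp (s + 2 * t) / (exp (s + 2 * t) + k)) +
          (1 - a) * log (1 - exp (s + 2 * t) / (exp (s + 2 * t) + k)))
      = fun t : ℝ => a * (s + 2 * t) + (1 - a) * log k - log (exp (s + 2 * t) + k) := by
    funext t
    have h1 : 1 - exp (s + 2 * t) / (exp (s + 2 * t) + k) = k / (exp (s + 2 * t) + k) := by
      field_simp
      ring
    rw [h1, log_div (exp_ne_zero _) (ne_of_gt (hpos t)),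
      log_div (ne_of_gt hk) (ne_of_gt (hpos t)), log_exp]
    ring
  rw [heq]
  have hE : HasDerivAt (fun t : ℝ => exp (s + 2 * t)) (exp (s + 2 * 0) * 2) 0 := by
    have : HasDerivAt (fun t : ℝ => s + 2 * t) 2 0 :=
      by simpa using ((hasDerivAt_id 0).const_mul 2).const_add s
    exact this.exp
  have hlog : HasDerivAt (fun t : ℝ => log (exp (s + 2 * t) + k))
      ((exp (s + 2 * 0) * 2) / (exp (s + 2 * 0) + k)) 0 :=
    (hE.add_const k).log (ne_of_gt (hpos 0))
  have hlin : HasDerivAt (fun t : ℝ => a * (s + 2 * t) + (1 - a) * log k) (a * 2) 0 := by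
    have : HasDerivAt (fun t : ℝ => s + 2 * t) 2 0 :=
      by simpa using ((hasDerivAt_id 0).const_mul 2).const_add s
    simpa using (this.const_mul a).add_const ((1 - a) * log k)
  have := hlin.sub hlog
  refine this.congr_deriv ?_
  have h0 : s + 2 * (0:ℝ) = s := by ring
  rw [h0]
  have hEk : exp s + k ≠ 0 := ne_of_gt (by positivity)
  field_simp

/-- Fix `ε`. If `θ*` is a local maximizer of `θ ↦ Ω(θ, ε)`, then the expected total number
of edges under the model equals the number of edges of the input network:
`Σ_{u < v} ρ u v = Σ_{u < v} A u v`. -/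
theorem expected_edge_count_eq_of_isLocalMax
    (n : ℕ) (A K : Fin n → Fin n → ℝ)
    (hA : ∀ u v, A u v = 0 ∨ A u v = 1) (hAsymm : ∀ u v, A u v = A v u)
    (hAdiag : ∀ u, A u u = 0)
    (hKsymm : ∀ u v, K u v = K v u) (hKpos : ∀ u v : Fin n, u ≠ v → 0 < K u v)
    (ε : ℝ) (θ : Fin n → ℝ)
    (hmax : IsLocalMax (fun θ : Fin n → ℝ => logLik A K θ ε) θ) :
    ∑ p ∈ univ.filter (fun p : Fin n × Fin n => p.1 < p.2), edgeProb K θ ε p.1 p.2 =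
      ∑ p ∈ univ.filter (fun p : Fin n × Fin n => p.1 < p.2), A p.1 p.2 := by
  set S := univ.filter (fun p : Fin n × Fin n => p.1 < p.2) with hS
  -- the one-parameter family θ + t·𝟙
  set φ : ℝ → (Fin n → ℝ) := fun t u => θ u + t with hφdef
  set g : ℝ → ℝ := fun t => ∑ p ∈ S,
      (A p.1 p.2 * log (exp (θ p.1 + θ p.2 + 2 * t) /
          (exp (θ p.1 + θ p.2 + 2 * t) + K p.1 p.2 ^ ε)) +
        (1 - A p.1 p.2) * log (1 - exp (θ p.1 + θ p.2 + 2 * t) /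
          (exp (θ p.1 + θ p.2 + 2 * t) + K p.1 p.2 ^ ε))) with hgdef
  -- g is the composition of logLik with φ
  have hcomp : (fun θ : Fin n → ℝ => logLik A K θ ε) ∘ φ = g := by
    funext t
    simp only [Function.comp, logLik, edgeProb, hgdef, hφdef]
    refine Finset.sum_congr rfl fun p hp => ?_
    have : θ p.1 + t + (θ p.2 + t) = θ p.1 + θ p.2 + 2 * t := by ring
    rw [this]
  -- local max of g at 0
  have hφc : Continuous φ := by
    apply continuous_pi
    intro u
    exact continuous_const.add continuous_id
  have hφ0 : φ 0 = θ := by funext u; simp [hφdef]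
  have hlocal : IsLocalMax g 0 := by
    rw [← hcomp]
    have h1 : IsMaxFilter (fun θ : Fin n → ℝ => logLik A K θ ε) (nhds θ) (φ 0) := by
      rwa [hφ0]
    have h2 : Filter.Tendsto φ (nhds 0) (nhds θ) := by
      have := hφc.tendsto 0
      rwa [hφ0] at this
    exact h1.comp_tendsto h2
  -- derivative of g at 0
  have hterm : ∀ p ∈ S, HasDerivAt (fun t : ℝ =>
      (A p.1 p.2 * log (exp (θ p.1 + θ p.2 + 2 * t) /
          (exp (θ p.1 + θ p.2 + 2 * t) + K p.1 p.2 ^ ε)) +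
        (1 - A p.1 p.2) * log (1 - exp (θ p.1 + θ p.2 + 2 * t) /
          (exp (θ p.1 + θ p.2 + 2 * t) + K p.1 p.2 ^ ε))))
      (2 * (A p.1 p.2 - edgeProb K θ ε p.1 p.2)) 0 := by
    intro p hp
    have hne : p.1 ≠ p.2 := ne_of_lt (by simpa [hS] using hp)
    have hk : 0 < K p.1 p.2 ^ ε := rpow_pos_of_pos (hKpos _ _ hne) ε
    have := key_hasDerivAt (θ p.1 + θ p.2) (K p.1 p.2 ^ ε) (A p.1 p.2) hk
    simpa [edgeProb] using this
  have hD : HasDerivAt g (∑ p ∈ S, 2 * (A p.1 p.2 - edgeProb K θ ε p.1 p.2)) 0 :=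
    HasDerivAt.fun_sum hterm
  have hzero : ∑ p ∈ S, 2 * (A p.1 p.2 - edgeProb K θ ε p.1 p.2) = 0 :=
    hlocal.hasDerivAt_eq_zero hD
  have h2 : (2:ℝ) * ∑ p ∈ S, (A p.1 p.2 - edgeProb K θ ε p.1 p.2) = 0 := by
    rw [Finset.mul_sum]; exact hzero
  have h3 : ∑ p ∈ S, (A p.1 p.2 - edgeProb K θ ε p.1 p.2) = 0 := by linarith
  rw [Finset.sum_sub_distrib] at h3
  linarith
end

section
/- For fixed core scores θ, the log-likelihood Ω is differentiable as a function of ε ∈ ℝ, and its derivative equals − Σ_{u < v} A u v · log(K u v) + Σ_{u < v} ρ u v · log(K u v), i.e., the negative of the aggregated log-distance of the input network plus the expected aggregated log-distance under the model. -/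
open Real Finset

lemma term_hasDerivAt (a s k : ℝ) (hk : 0 < k) (ε : ℝ) :
    HasDerivAt (fun e : ℝ => a * log (exp s / (exp s + k ^ e)) +
      (1 - a) * log (1 - exp s / (exp s + k ^ e)))
      ((exp s / (exp s + k ^ ε) - a) * log k) ε := by
  have hD : ∀ e : ℝ, 0 < exp s + k ^ e := fun e => by positivity
  have hfun : (fun e : ℝ => a * log (exp s / (exp s + k ^ e)) +
      (1 - a) * log (1 - exp s / (exp s + k ^ e)))
      = fun e : ℝ => a * s + (1 - a) * (e * log k) - log (exp s + k ^ e) := by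
    funext e
    have hDne : exp s + k ^ e ≠ 0 := (hD e).ne'
    have h1 : 1 - exp s / (exp s + k ^ e) = k ^ e / (exp s + k ^ e) := by
      field_simp
      ring
    rw [h1, log_div (exp_pos s).ne' hDne, log_exp,
      log_div (rpow_pos_of_pos hk e).ne' hDne, log_rpow hk]
    ring
  rw [hfun]
  have h1 : HasDerivAt (fun e : ℝ => k ^ e) (k ^ ε * log k) ε :=
    (hasStrictDerivAt_const_rpow hk ε).hasDerivAt
  have h2 : HasDerivAt (fun e : ℝ => exp s + k ^ e) (k ^ ε * log k) ε :=
    by exact h1.const_add (exp s)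
  have h3 : HasDerivAt (fun e : ℝ => log (exp s + k ^ e))
      ((k ^ ε * log k) / (exp s + k ^ ε)) ε := h2.log (hD ε).ne'
  have h4 : HasDerivAt (fun e : ℝ => a * s + (1 - a) * (e * log k))
      ((1 - a) * log k) ε := by
    simpa using
      (((hasDerivAt_id ε).mul_const (log k)).const_mul (1 - a)).const_add (a*s)
  have : HasDerivAt (fun e : ℝ => a * s + (1 - a) * (e * log k) - log (exp s + k ^ e))
      ((1 - a) * log k - (k ^ ε * log k) / (exp s + k ^ ε)) ε := h4.sub h3
  convert this using 1
  have hDne : exp s + k ^ ε ≠ 0 := (hD ε).ne'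
  have hsplit : exp s / (exp s + k ^ ε) = 1 - k ^ ε / (exp s + k ^ ε) := by
    rw [eq_sub_iff_add_eq, ← add_div, div_self hDne]
  rw [hsplit]
  ring

/-- For fixed core scores `θ`, the log-likelihood `Ω` is differentiable as a function of
`ε ∈ ℝ`, and its derivative equals
`- Σ_{u < v} A u v * log (K u v) + Σ_{u < v} ρ u v * log (K u v)`: the negative of the
aggregated log-distance of the input network plus the expected aggregated log-distance
under the model. -/
theorem logLik_deriv_epsilon
    (n : ℕ) (A K : Fin n → Fin n → ℝ)
    (hA : ∀ u v, A u v = 0 ∨ A u v = 1) (hAsymm : ∀ u v, A u v = A v u)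
    (hAdiag : ∀ u, A u u = 0)
    (hKsymm : ∀ u v, K u v = K v u) (hKpos : ∀ u v : Fin n, u ≠ v → 0 < K u v)
    (θ : Fin n → ℝ) :
    Differentiable ℝ (fun ε : ℝ => logLik A K θ ε) ∧
    ∀ ε : ℝ,
      HasDerivAt (fun e : ℝ => logLik A K θ e)
        (-(∑ p ∈ univ.filter (fun p : Fin n × Fin n => p.1 < p.2),
              A p.1 p.2 * log (K p.1 p.2)) +
          ∑ p ∈ univ.filter (fun p : Fin n × Fin n => p.1 < p.2),
            edgeProb K θ ε p.1 p.2 * log (K p.1 p.2)) ε := by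
  have key : ∀ ε : ℝ,
      HasDerivAt (fun e : ℝ => logLik A K θ e)
        (∑ p ∈ univ.filter (fun p : Fin n × Fin n => p.1 < p.2),
          (edgeProb K θ ε p.1 p.2 - A p.1 p.2) * log (K p.1 p.2)) ε := by
    intro ε
    simp only [logLik, edgeProb]
    apply HasDerivAt.fun_sum
    intro p hp
    have hlt : p.1 < p.2 := (Finset.mem_filter.mp hp).2
    exact term_hasDerivAt _ _ _ (hKpos _ _ hlt.ne) ε
  have hval : ∀ ε : ℝ,
      (∑ p ∈ univ.filter (fun p : Fin n × Fin n => p.1 < p.2),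
          (edgeProb K θ ε p.1 p.2 - A p.1 p.2) * log (K p.1 p.2)) =
      (-(∑ p ∈ univ.filter (fun p : Fin n × Fin n => p.1 < p.2),
              A p.1 p.2 * log (K p.1 p.2)) +
          ∑ p ∈ univ.filter (fun p : Fin n × Fin n => p.1 < p.2),
            edgeProb K θ ε p.1 p.2 * log (K p.1 p.2)) := by
    intro ε
    rw [← Finset.sum_neg_distrib, ← Finset.sum_add_distrib]
    exact Finset.sum_congr rfl fun p _ => by ring
  refine ⟨fun ε => (key ε).differentiableAt, fun ε => ?_⟩
  rw [← hval ε]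
  exact key ε
end
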